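/- Every Lie algebra homomorphism ξ of sol (basis X₁,X₂,X₃, brackets [X₃,X₁]=X₁, [X₃,X₂]=−X₂) has, in the basis (X₁,X₂,X₃), one of the matrix forms: rows ((0,0,a),(0,0,b),(0,0,γ)); rows ((α,0,a),(0,β,b),(0,0,1)); or rows ((0,β,a),(α,0,b),(0,0,−1)). -/
import Mathlib


/-- The bracket of `sol`: `[X₃,X₁] = X₁`, `[X₃,X₂] = −X₂`. -/
def brS (u v : Fin 3 → ℝ) : Fin 3 → ℝ :=
  ![u 2 * v 0 - u 0 * v 2, u 1 * v 2 - u 2 * v 1, 0]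

/-- Every Lie algebra endomorphism of `sol` has in the basis `(X₁,X₂,X₃)` one of the
forms: rows `((0,0,a),(0,0,b),(0,0,γ))`; rows `((α,0,a),(0,β,b),(0,0,1))`;
or rows `((0,β,a),(α,0,b),(0,0,−1))`. -/
theorem sol_homomorphism_form
    (M : Matrix (Fin 3) (Fin 3) ℝ)
    (hM : ∀ u v, M.mulVec (brS u v) = brS (M.mulVec u) (M.mulVec v)) :
    (∀ i, M i 0 = 0 ∧ M i 1 = 0) ∨
    (M 2 0 = 0 ∧ M 2 1 = 0 ∧ M 2 2 = 1 ∧ M 0 1 = 0 ∧ M 1 0 = 0) ∨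
    (M 2 0 = 0 ∧ M 2 1 = 0 ∧ M 2 2 = -1 ∧ M 0 0 = 0 ∧ M 1 1 = 0) := by
  have h1 := hM ![0,0,1] ![1,0,0]
  have h2 := hM ![0,0,1] ![0,1,0]
  have e10 := congrFun h1 0
  have e11 := congrFun h1 1
  have e12 := congrFun h1 2
  have e20 := congrFun h2 0
  have e21 := congrFun h2 1
  have e22 := congrFun h2 2
  simp [brS, Matrix.mulVec, dotProduct, Fin.sum_univ_three] at e10 e11 e12 e20 e21 e22
  simp only [e12, e22, mul_zero, sub_zero, zero_mul] at e10 e11 e20 e21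
  rcases eq_or_ne (M 2 2) 1 with h | h1'
  · right; left
    rw [h] at e11 e20
    exact ⟨e12, e22, h, by linarith, by linarith⟩
  · rcases eq_or_ne (M 2 2) (-1) with h | h2'
    · right; right
      rw [h] at e10 e21
      exact ⟨e12, e22, h, by linarith, by linarith⟩
    · left
      have h00 : M 0 0 = 0 := by
        have := mul_eq_zero.mp (show (M 2 2 - 1) * M 0 0 = 0 by linear_combination -e10)
        rcases this with h | h; · exact absurd (by linarith) h1'
        exact h
      have h10 : M 1 0 = 0 := by
        have := mul_eq_zero.mp (show (M 2 2 + 1) * M 1 0 = 0 by linear_combination e11)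
        rcases this with h | h; · exact absurd (by linarith) h2'
        exact h
      have h01 : M 0 1 = 0 := by
        have := mul_eq_zero.mp (show (M 2 2 + 1) * M 0 1 = 0 by linear_combination -e20)
        rcases this with h | h; · exact absurd (by linarith) h2'
        exact h
      have h11 : M 1 1 = 0 := by
        have := mul_eq_zero.mp (show (M 2 2 - 1) * M 1 1 = 0 by linear_combination e21)
        rcases this with h | h; · exact absurd (by linarith) h1'
        exact h
      intro i
      fin_cases i <;> exact ⟨by assumption, by assumption⟩
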